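/- If the pushout L +_M R of a span of graph homomorphisms L ← M → R (in the category of directed multigraphs) is a complete graph (every pair of distinct vertices is joined by at least one edge), then at least one of the two homomorphisms M → L, M → R is surjective on vertices. -/

import Mathlib

open CategoryTheory CategoryTheory.Limits

universe u

/-- The category of directed multigraphs: `Set`-valued functors on the
two-object schema `{E ⇉ V}` (realized as the walking parallel pair). -/
abbrev Gr : Type (u + 1) := WalkingParallelPair ⥤ Type u

/-- The edges of a directed multigraph. -/
abbrev Gr.Edges (G : Gr.{u}) : Type u := G.obj WalkingParallelPair.zero

/-- The vertices of a directed multigraph. -/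
abbrev Gr.Verts (G : Gr.{u}) : Type u := G.obj WalkingParallelPair.one

/-- The source of an edge. -/
def Gr.src (G : Gr.{u}) (e : G.Edges) : G.Verts := G.map WalkingParallelPairHom.left e

/-- The target of an edge. -/
def Gr.tgt (G : Gr.{u}) (e : G.Edges) : G.Verts := G.map WalkingParallelPairHom.right e

/-- A multigraph is complete if every pair of distinct vertices is joined by
at least one edge. -/
def Gr.IsComplete (G : Gr.{u}) : Prop :=
  ∀ u v : G.Verts, u ≠ v →
    ∃ e : G.Edges, (G.src e = u ∧ G.tgt e = v) ∨ (G.src e = v ∧ G.tgt e = u)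

section Aux
open WalkingParallelPair WalkingParallelPairHom

/-- Vertex type of the test graph. -/
abbrev TV : Type u := ULift (Fin 3)
def vA : TV.{u} := ULift.up 0
def vB : TV.{u} := ULift.up 1
def vC : TV.{u} := ULift.up 2

/-- Edge type of the test graph: all pairs except those joining `vA` and `vB`. -/
abbrev TE : Type u :=
  {p : TV.{u} × TV.{u} // ¬((p.1 = vA ∧ p.2 = vB) ∨ (p.1 = vB ∧ p.2 = vA))}

/-- The test graph. -/
def TG : Gr.{u} := parallelPair (TypeCat.ofHom (fun e : TE.{u} => e.1.1)) (TypeCat.ofHom (fun e : TE.{u} => e.1.2))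

/-- If the pushout `L +_M R` of a span of multigraph homomorphisms
`L ← M → R` is a complete graph, then at least one of the two legs is
surjective on vertices. -/
theorem pushout_complete_implies_leg_vertex_surjective
    (M L R : Gr.{u}) (f : M ⟶ L) (g : M ⟶ R)
    (hcomp : (pushout f g).IsComplete) :
    Function.Surjective (f.app WalkingParallelPair.one) ∨
    Function.Surjective (g.app WalkingParallelPair.one) := by
  by_contra hcon
  push_neg at hcon
  obtain ⟨hf, hg⟩ := hcon
  simp only [Function.Surjective, not_forall, not_exists] at hf hg
  obtain ⟨a, ha⟩ := hf
  obtain ⟨b, hb⟩ := hg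
  classical
  -- vertex maps
  let vL : L.Verts → TV.{u} := fun v => if v = a then vA else vC
  let vR : R.Verts → TV.{u} := fun v => if v = b then vB else vC
  have hvLA : ∀ v, vL v ≠ vB := by
    intro v; simp only [vL]; split_ifs <;>
      exact fun h => absurd (congrArg ULift.down h) (by decide)
  have hvRB : ∀ v, vR v ≠ vA := by
    intro v; simp only [vR]; split_ifs <;>
      exact fun h => absurd (congrArg ULift.down h) (by decide)
  let eL : L.Edges → TE.{u} := fun e =>
    ⟨(vL (L.src e), vL (L.tgt e)), by
      rintro (⟨h1, h2⟩ | ⟨h1, h2⟩)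
      · exact hvLA _ h2
      · exact hvLA _ h1⟩
  let eR : R.Edges → TE.{u} := fun e =>
    ⟨(vR (R.src e), vR (R.tgt e)), by
      rintro (⟨h1, h2⟩ | ⟨h1, h2⟩)
      · exact hvRB _ h1
      · exact hvRB _ h2⟩
  let φL : L ⟶ TG.{u} :=
    { app := fun x => match x with
        | WalkingParallelPair.zero => TypeCat.ofHom eL
        | WalkingParallelPair.one => TypeCat.ofHom vL
      naturality := by
        rintro _ _ (_ | _ | _)
        · rfl
        · rfl
        · show L.map (𝟙 _) ≫ _ = _ ≫ TG.map (𝟙 _)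
          rw [CategoryTheory.Functor.map_id, CategoryTheory.Functor.map_id]
          rfl }
  let φR : R ⟶ TG.{u} :=
    { app := fun x => match x with
        | WalkingParallelPair.zero => TypeCat.ofHom eR
        | WalkingParallelPair.one => TypeCat.ofHom vR
      naturality := by
        rintro _ _ (_ | _ | _)
        · rfl
        · rfl
        · show R.map (𝟙 _) ≫ _ = _ ≫ TG.map (𝟙 _)
          rw [CategoryTheory.Functor.map_id, CategoryTheory.Functor.map_id]
          rfl }
  have hnatL : ∀ e, L.src (f.app _ e) = f.app _ (M.src e) :=
    fun e => (types_congr_hom (f.naturality WalkingParallelPairHom.left) e).symm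
  have hnatL' : ∀ e, L.tgt (f.app _ e) = f.app _ (M.tgt e) :=
    fun e => (types_congr_hom (f.naturality WalkingParallelPairHom.right) e).symm
  have hnatR : ∀ e, R.src (g.app _ e) = g.app _ (M.src e) :=
    fun e => (types_congr_hom (g.naturality WalkingParallelPairHom.left) e).symm
  have hnatR' : ∀ e, R.tgt (g.app _ e) = g.app _ (M.tgt e) :=
    fun e => (types_congr_hom (g.naturality WalkingParallelPairHom.right) e).symm
  have hvLf : ∀ m, vL (f.app _ m) = vC := fun m => if_neg (ha m)
  have hvRg : ∀ m, vR (g.app _ m) = vC := fun m => if_neg (hb m)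
  have hcomm : f ≫ φL = g ≫ φR := by
    apply NatTrans.ext
    funext x
    cases x with
    | zero =>
      apply ConcreteCategory.hom_ext; intro e
      show eL (f.app _ e) = eR (g.app _ e)
      apply Subtype.ext
      show (vL (L.src _), vL (L.tgt _)) = (vR (R.src _), vR (R.tgt _))
      rw [hnatL, hnatL', hnatR, hnatR', hvLf, hvLf, hvRg, hvRg]
    | one =>
      apply ConcreteCategory.hom_ext; intro m
      show vL (f.app _ m) = vR (g.app _ m)
      rw [hvLf, hvRg]
  let h : pushout f g ⟶ TG.{u} := pushout.desc φL φR hcomm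
  have hA : h.app WalkingParallelPair.one ((pushout.inl f g).app _ a) = vA := by
    have h1 := types_congr_hom (congrArg (fun n => n.app WalkingParallelPair.one)
      (pushout.inl_desc φL φR hcomm)) a
    simp only [FunctorToTypes.comp] at h1
    rw [h1]
    show vL a = vA
    exact if_pos rfl
  have hB : h.app WalkingParallelPair.one ((pushout.inr f g).app _ b) = vB := by
    have h1 := types_congr_hom (congrArg (fun n => n.app WalkingParallelPair.one)
      (pushout.inr_desc φL φR hcomm)) b
    simp only [FunctorToTypes.comp] at h1
    rw [h1]
    show vR b = vB
    exact if_pos rfl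
  have hne : (pushout.inl f g).app WalkingParallelPair.one a ≠
      (pushout.inr f g).app WalkingParallelPair.one b := by
    intro hEq
    rw [hEq, hB] at hA
    exact absurd (congrArg ULift.down hA) (by decide)
  obtain ⟨e, he⟩ := hcomp _ _ hne
  have hsrc : h.app WalkingParallelPair.one ((pushout f g).src e) =
      (h.app WalkingParallelPair.zero e).1.1 :=
    types_congr_hom (h.naturality WalkingParallelPairHom.left) e
  have htgt : h.app WalkingParallelPair.one ((pushout f g).tgt e) =
      (h.app WalkingParallelPair.zero e).1.2 :=
    types_congr_hom (h.naturality WalkingParallelPairHom.right) e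
  rcases he with ⟨h1, h2⟩ | ⟨h1, h2⟩
  · exact (h.app WalkingParallelPair.zero e).2
      (Or.inl ⟨by rw [← hsrc, h1, hA], by rw [← htgt, h2, hB]⟩)
  · exact (h.app WalkingParallelPair.zero e).2
      (Or.inr ⟨by rw [← hsrc, h1, hB], by rw [← htgt, h2, hA]⟩)
end Aux
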